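/- In the polynomial ring (ZMod 3)[X₀,X₁,X₂,X₃,X₄] (i.e., MvPolynomial (Fin 5) (ZMod 3)), the polynomial P = X₀³X₄ − X₁³X₂ − X₀²X₁X₃² + X₃³ is a prime element (equivalently, irreducible, so that the ideal it generates is prime and the quotient ring is an integral domain). -/

import Mathlib

open MvPolynomial

private noncomputable def eqv5 :
    MvPolynomial (Fin 5) (ZMod 3) ≃ₐ[ZMod 3] Polynomial (MvPolynomial (Fin 4) (ZMod 3)) :=
  (renameEquiv (ZMod 3) (Equiv.swap (0 : Fin 5) 4)).trans (MvPolynomial.finSuccEquiv (ZMod 3) 4)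

private noncomputable def eqv4 :
    MvPolynomial (Fin 4) (ZMod 3) ≃ₐ[ZMod 3] Polynomial (MvPolynomial (Fin 3) (ZMod 3)) :=
  (renameEquiv (ZMod 3) (Equiv.swap (0 : Fin 4) 3)).trans (MvPolynomial.finSuccEquiv (ZMod 3) 3)

private lemma primeX3 : Prime (X 3 : MvPolynomial (Fin 4) (ZMod 3)) := by
  have h : eqv4 (X 3) = Polynomial.X := by
    have s : Equiv.swap (0 : Fin 4) 3 3 = 0 := by decide
    simp [eqv4, s, finSuccEquiv_X_zero]
  rw [← MulEquiv.prime_iff eqv4]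
  simpa [h] using Polynomial.prime_X
    (R := MvPolynomial (Fin 3) (ZMod 3))

private lemma evalpt (p : MvPolynomial (Fin 4) (ZMod 3))
    (h : (X 3 : MvPolynomial (Fin 4) (ZMod 3)) ∣ p) :
    eval (fun j => if j = 2 then 1 else 0) p = 0 := by
  obtain ⟨c, rfl⟩ := h
  simp

/-- The defining relation `P = X₀³X₄ − X₁³X₂ − X₀²X₁X₃² + X₃³` of the ring of even-weight
Siegel modular forms of degree 2 in characteristic 3 is a prime element of
`(ZMod 3)[X₀,…,X₄]`. -/
theorem relation_P_prime :
    Prime (X 0 ^ 3 * X 4 - X 1 ^ 3 * X 2 - X 0 ^ 2 * X 1 * X 3 ^ 2 + X 3 ^ 3 :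
      MvPolynomial (Fin 5) (ZMod 3)) := by
  set a : MvPolynomial (Fin 4) (ZMod 3) := X 3 ^ 3 with ha
  set b : MvPolynomial (Fin 4) (ZMod 3) :=
    -(X 0 ^ 3 * X 1) - X 3 ^ 2 * X 0 * X 2 ^ 2 + X 2 ^ 3 with hb
  set q : Polynomial (MvPolynomial (Fin 4) (ZMod 3)) :=
    Polynomial.C a * Polynomial.X + Polynomial.C b with hq
  -- image computation
  have himg :
      eqv5 (X 0 ^ 3 * X 4 - X 1 ^ 3 * X 2 - X 0 ^ 2 * X 1 * X 3 ^ 2 + X 3 ^ 3) = q := by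
    have h0 : (MvPolynomial.finSuccEquiv (ZMod 3) 4) (X 0) = Polynomial.X :=
      finSuccEquiv_X_zero
    have h1 : (MvPolynomial.finSuccEquiv (ZMod 3) 4) (X 1) = Polynomial.C (X 0) :=
      finSuccEquiv_X_succ (j := 0)
    have h2 : (MvPolynomial.finSuccEquiv (ZMod 3) 4) (X 2) = Polynomial.C (X 1) :=
      finSuccEquiv_X_succ (j := 1)
    have h3 : (MvPolynomial.finSuccEquiv (ZMod 3) 4) (X 3) = Polynomial.C (X 2) :=
      finSuccEquiv_X_succ (j := 2)
    have h4 : (MvPolynomial.finSuccEquiv (ZMod 3) 4) (X 4) = Polynomial.C (X 3) :=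
      finSuccEquiv_X_succ (j := 3)
    have s0 : Equiv.swap (0 : Fin 5) 4 0 = 4 := by decide
    have s1 : Equiv.swap (0 : Fin 5) 4 1 = 1 := by decide
    have s2 : Equiv.swap (0 : Fin 5) 4 2 = 2 := by decide
    have s3 : Equiv.swap (0 : Fin 5) 4 3 = 3 := by decide
    have s4 : Equiv.swap (0 : Fin 5) 4 4 = 0 := by decide
    simp only [hq, ha, hb, eqv5, AlgEquiv.trans_apply, map_add, map_sub, map_mul, map_pow,
      renameEquiv_apply, rename_X, s0, s1, s2, s3, s4, h0, h1, h2, h3, h4, map_neg]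
    ring
  have ha0 : a ≠ 0 := pow_ne_zero _ (MvPolynomial.X_ne_zero _)
  -- b is not divisible by X 3
  have hX3b : ¬ (X 3 : MvPolynomial (Fin 4) (ZMod 3)) ∣ b := by
    intro h
    have := evalpt b h
    simp [hb] at this
  -- q is primitive
  have hprim : q.IsPrimitive := by
    intro r hr
    by_contra hru
    have hcoeff := (Polynomial.C_dvd_iff_dvd_coeff r q).mp hr
    have hra : r ∣ a := by simpa [hq] using hcoeff 1
    have hrb : r ∣ b := by simpa [hq] using hcoeff 0
    have hr0 : r ≠ 0 := by rintro rfl; exact ha0 (zero_dvd_iff.mp hra)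
    obtain ⟨i, hi, hir⟩ := WfDvdMonoid.exists_irreducible_factor hru hr0
    have hiprime : Prime i := UniqueFactorizationMonoid.irreducible_iff_prime.mp hi
    have hiX3 : i ∣ X 3 := hiprime.dvd_of_dvd_pow (hir.trans hra)
    obtain ⟨c, hc⟩ := hiX3
    rcases primeX3.irreducible.isUnit_or_isUnit hc with hu | hu
    · exact hi.not_isUnit hu
    · obtain ⟨u, rfl⟩ := hu
      have hX3i : (X 3 : MvPolynomial (Fin 4) (ZMod 3)) ∣ i :=
        ⟨(u⁻¹ : _), by rw [hc]; simp [mul_assoc]⟩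
      exact hX3b (hX3i.trans (hir.trans hrb))
  -- q is irreducible via the fraction field
  have hqirr : Irreducible q := by
    set K := FractionRing (MvPolynomial (Fin 4) (ZMod 3))
    apply hprim.irreducible_of_irreducible_map_of_injective
      (IsFractionRing.injective (MvPolynomial (Fin 4) (ZMod 3)) K)
    apply Polynomial.irreducible_of_degree_eq_one
    have : algebraMap (MvPolynomial (Fin 4) (ZMod 3)) K a ≠ 0 := by
      intro h
      exact ha0 ((injective_iff_map_eq_zero _).mp
        (IsFractionRing.injective (MvPolynomial (Fin 4) (ZMod 3)) K) a h)
    simp only [hq, Polynomial.map_add, Polynomial.map_mul, Polynomial.map_C, Polynomial.map_X]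
    exact Polynomial.degree_linear this
  have hqprime : Prime q := UniqueFactorizationMonoid.irreducible_iff_prime.mp hqirr
  rw [← MulEquiv.prime_iff eqv5]
  simpa [himg] using hqprime
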